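/- Let g be a Lie algebra and H, E, A, B ∈ g satisfy [H, E] = E, [A, B] = E, [H, A] = αA, [H, B] = (1−α)B for some scalar α, and [A, E] = [B, E] = 0. Then r = H ⊗ E − E ⊗ H + A ⊗ B − B ⊗ A satisfies the classical Yang–Baxter equation. -/
import Mathlib


open TensorProduct in
noncomputable def cybe {R : Type*} [CommRing R] {g : Type*} [LieRing g] [LieAlgebra R g]
    {ι : Type*} [Fintype ι] (a b : ι → g) : g ⊗[R] (g ⊗[R] g) :=
  ∑ i, ∑ j,
    (⁅a i, a j⁆ ⊗ₜ[R] (b i ⊗ₜ[R] b j) + a i ⊗ₜ[R] (⁅b i, a j⁆ ⊗ₜ[R] b j)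
      + a i ⊗ₜ[R] (a j ⊗ₜ[R] ⁅b i, b j⁆))

/-- If `[H,E] = E`, `[A,B] = E`, `[H,A] = αA`, `[H,B] = (1−α)B` and
`[A,E] = [B,E] = 0`, then `r = H ⊗ E − E ⊗ H + A ⊗ B − B ⊗ A` satisfies the
classical Yang–Baxter equation.  The skew `r` is encoded by the coefficient
family `a = (H, −E, A, −B)`, `b = (E, H, B, A)`. -/
theorem stmt7 {R : Type*} [CommRing R] {g : Type*} [LieRing g] [LieAlgebra R g]
    (H E A B : g) (α : R)
    (hHE : ⁅H, E⁆ = E) (hAB : ⁅A, B⁆ = E)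
    (hHA : ⁅H, A⁆ = α • A) (hHB : ⁅H, B⁆ = (1 - α) • B)
    (hAE : ⁅A, E⁆ = 0) (hBE : ⁅B, E⁆ = 0) :
    cybe (R := R) ![H, -E, A, -B] ![E, H, B, A] = 0 := by
  have hEH : ⁅E, H⁆ = -E := by rw [← lie_skew, hHE]
  have hBA : ⁅B, A⁆ = -E := by rw [← lie_skew, hAB]
  have hAH : ⁅A, H⁆ = -(α • A) := by rw [← lie_skew, hHA]
  have hBH : ⁅B, H⁆ = -((1 - α) • B) := by rw [← lie_skew, hHB]
  have hEA : ⁅E, A⁆ = 0 := by rw [← lie_skew, hAE, neg_zero]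
  have hEB : ⁅E, B⁆ = 0 := by rw [← lie_skew, hBE, neg_zero]
  simp only [cybe, Fin.sum_univ_four, Matrix.cons_val_zero, Matrix.cons_val_one,
    Matrix.head_cons, Matrix.cons_val_two, Matrix.tail_cons, Matrix.cons_val_three,
    lie_neg, neg_lie, lie_self, hHE, hAB, hHA, hHB, hAE, hBE, hEH, hBA, hAH, hBH, hEA, hEB,
    neg_neg, TensorProduct.tmul_neg, TensorProduct.neg_tmul, TensorProduct.tmul_zero,
    TensorProduct.zero_tmul, TensorProduct.smul_tmul, TensorProduct.tmul_smul]
  module
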